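/- Let A = ⨁_{i∈ℕ} A_i be an ℕ-graded K-algebra with A_0 = K, generated by A_1 = Kx_1 ⊕ ... ⊕ Kx_n, such that for each i there exist a nonzero a ∈ A and a scalar q_{i,a} ≠ 1 with x_i a = q_{i,a} a x_i. Then for any K-algebra automorphism sigma of A and any nonzero homogeneous element x of degree d, one can write sigma(x) = y_d + y_{>d} where y_d is a nonzero element of A_d and y_{>d} lies in ⨁_{i ≥ d+1} A_i. -/

import Mathlib

section Aux

variable {K A : Type} [Field K] [Ring A] [Algebra K A]
  (𝒜 : ℕ → Submodule K A) [GradedAlgebra 𝒜]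

lemma aux_proj_add (a b : A) (j : ℕ) :
    (DirectSum.decompose 𝒜 (a + b) j : A) =
      (DirectSum.decompose 𝒜 a j : A) + (DirectSum.decompose 𝒜 b j : A) := by
  rw [DirectSum.decompose_add, DirectSum.add_apply, Submodule.coe_add]

lemma aux_proj_sub (a b : A) (j : ℕ) :
    (DirectSum.decompose 𝒜 (a - b) j : A) =
      (DirectSum.decompose 𝒜 a j : A) - (DirectSum.decompose 𝒜 b j : A) := by
  have h := aux_proj_add 𝒜 (a - b) b j
  rw [sub_add_cancel] at h
  rw [h, add_sub_cancel_right]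

lemma aux_proj_smul (k : K) (a : A) (j : ℕ) :
    (DirectSum.decompose 𝒜 (k • a) j : A) = k • (DirectSum.decompose 𝒜 a j : A) := by
  rw [DirectSum.decompose_smul]
  rfl

lemma aux_memF (d : ℕ) {a : A}
    (h : ∀ j < d, (DirectSum.decompose 𝒜 a j : A) = 0) :
    a ∈ ⨆ i, ⨆ (_ : d ≤ i), 𝒜 i := by
  classical
  rw [← DirectSum.sum_support_decompose 𝒜 a]
  refine Submodule.sum_mem _ fun j _ => ?_
  rcases lt_or_ge j d with hjd | hjd
  · rw [h j hjd]; exact Submodule.zero_mem _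
  · exact Submodule.mem_iSup_of_mem j (Submodule.mem_iSup_of_mem hjd (SetLike.coe_mem _))

lemma aux_projF {d : ℕ} {a : A} (h : a ∈ ⨆ i, ⨆ (_ : d ≤ i), 𝒜 i)
    {j : ℕ} (hj : j < d) : (DirectSum.decompose 𝒜 a j : A) = 0 := by
  refine Submodule.iSup_induction _ (motive := fun a => (DirectSum.decompose 𝒜 a j : A) = 0)
    h ?_ ?_ ?_
  · intro i z hz
    by_cases hdi : d ≤ i
    · rw [iSup_pos hdi] at hz
      exact DirectSum.decompose_of_mem_ne 𝒜 hz (by omega)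
    · rw [iSup_neg hdi] at hz
      simp only [Submodule.mem_bot] at hz
      subst hz; simp
  · simp
  · intro z w hz hw
    rw [aux_proj_add, hz, hw, add_zero]

lemma aux_Fmul (p q : ℕ) :
    (⨆ i, ⨆ (_ : p ≤ i), 𝒜 i) * (⨆ i, ⨆ (_ : q ≤ i), 𝒜 i) ≤
      ⨆ i, ⨆ (_ : p + q ≤ i), 𝒜 i := by
  rw [Submodule.mul_le]
  intro m hm n hn
  refine Submodule.iSup_induction _
    (motive := fun m => m * n ∈ ⨆ i, ⨆ (_ : p + q ≤ i), 𝒜 i) hm ?_ (by simp) ?_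
  · intro i z hz
    by_cases hpi : p ≤ i
    · rw [iSup_pos hpi] at hz
      refine Submodule.iSup_induction _
        (motive := fun n => z * n ∈ ⨆ i, ⨆ (_ : p + q ≤ i), 𝒜 i) hn ?_ (by simp) ?_
      · intro k w hw
        by_cases hqk : q ≤ k
        · rw [iSup_pos hqk] at hw
          exact Submodule.mem_iSup_of_mem (i + k)
            (Submodule.mem_iSup_of_mem (by omega) (SetLike.mul_mem_graded hz hw))
        · rw [iSup_neg hqk] at hw
          simp only [Submodule.mem_bot] at hw
          subst hw; simp
      · intro a b ha hb
        rw [mul_add]; exact Submodule.add_mem _ ha hb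
    · rw [iSup_neg hpi] at hz
      simp only [Submodule.mem_bot] at hz
      subst hz; simp
  · intro a b ha hb
    rw [add_mul]; exact Submodule.add_mem _ ha hb

lemma aux_Fpow (k : ℕ) :
    (⨆ i, ⨆ (_ : 1 ≤ i), 𝒜 i) ^ k ≤ ⨆ i, ⨆ (_ : k ≤ i), 𝒜 i := by
  induction k with
  | zero =>
    rw [pow_zero]
    intro a ha
    exact aux_memF 𝒜 0 (fun j hj => absurd hj j.not_lt_zero)
  | succ k ih =>
    rw [pow_succ]
    exact le_trans (mul_le_mul' ih le_rfl) (aux_Fmul 𝒜 k 1)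

lemma aux_pow_mono {M N : Submodule K A} (h : M ≤ N) (k : ℕ) : M ^ k ≤ N ^ k := by
  induction k with
  | zero => simp
  | succ k ih => rw [pow_succ, pow_succ]; exact mul_le_mul' ih h

lemma aux_deg1 (hgen : Algebra.adjoin K ((𝒜 1 : Submodule K A) : Set A) = ⊤) (d : ℕ) :
    𝒜 d ≤ 𝒜 1 ^ d := by
  classical
  intro z hz
  have key : ∀ w, w ∈ Algebra.adjoin K ((𝒜 1 : Submodule K A) : Set A) →
      ∀ k, (DirectSum.decompose 𝒜 w k : A) ∈ 𝒜 1 ^ k := by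
    intro w hw
    induction hw using Algebra.adjoin_induction with
    | mem w hw =>
      intro k
      rcases eq_or_ne k 1 with rfl | hk
      · rw [DirectSum.decompose_of_mem_same 𝒜 hw, pow_one]; exact hw
      · rw [DirectSum.decompose_of_mem_ne 𝒜 hw (Ne.symm hk)]; exact Submodule.zero_mem _
    | algebraMap r =>
      intro k
      rw [Algebra.algebraMap_eq_smul_one, aux_proj_smul]
      cases k with
      | zero =>
        rw [DirectSum.decompose_of_mem_same 𝒜 SetLike.GradedOne.one_mem, pow_zero]
        exact Submodule.smul_mem _ r (Submodule.one_le.mp le_rfl)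
      | succ k =>
        rw [DirectSum.decompose_of_mem_ne 𝒜 SetLike.GradedOne.one_mem (by omega), smul_zero]
        exact Submodule.zero_mem _
    | add u v hu hv ihu ihv =>
      intro k
      rw [aux_proj_add]
      exact Submodule.add_mem _ (ihu k) (ihv k)
    | mul u v hu hv ihu ihv =>
      intro k
      rw [DirectSum.decompose_mul, DirectSum.coe_mul_apply]
      refine Submodule.sum_mem _ ?_
      rintro ⟨i, j⟩ hij
      simp only [Finset.mem_filter] at hij
      have h2 : (DirectSum.decompose 𝒜 u i : A) * (DirectSum.decompose 𝒜 v j : A) ∈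
          𝒜 1 ^ i * 𝒜 1 ^ j := Submodule.mul_mem_mul (ihu i) (ihv j)
      rw [← pow_add] at h2
      rwa [hij.2] at h2
  have h3 := key z (by rw [hgen]; trivial) d
  rwa [DirectSum.decompose_of_mem_same 𝒜 hz] at h3

lemma aux_q (h0 : 𝒜 0 = Submodule.span K {(1 : A)}) {u b : A} (hb : b ≠ 0) {c : K}
    (hc : c ≠ 1) (hrel : u * b = c • (b * u)) : u ∈ ⨆ i, ⨆ (_ : 1 ≤ i), 𝒜 i := by
  classical
  have h0mem : (DirectSum.decompose 𝒜 u 0 : A) ∈ Submodule.span K {(1 : A)} := by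
    rw [← h0]; exact SetLike.coe_mem _
  obtain ⟨lam, hlam⟩ := Submodule.mem_span_singleton.mp h0mem
  suffices hlam0 : lam = 0 by
    refine aux_memF 𝒜 1 fun j hj => ?_
    obtain rfl : j = 0 := Nat.lt_one_iff.mp hj
    rw [← hlam, hlam0, zero_smul]
  by_contra hne
  have hbne : ∃ m, (DirectSum.decompose 𝒜 b m : A) ≠ 0 := by
    by_contra hall
    push_neg at hall
    apply hb
    rw [← DirectSum.sum_support_decompose 𝒜 b]
    exact Finset.sum_eq_zero fun j _ => hall j
  set m := Nat.find hbne with hmdef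
  have hm : (DirectSum.decompose 𝒜 b m : A) ≠ 0 := Nat.find_spec hbne
  have hmin : ∀ j < m, (DirectSum.decompose 𝒜 b j : A) = 0 := fun j hj =>
    not_not.mp (Nat.find_min hbne hj)
  have hbF : b ∈ ⨆ i, ⨆ (_ : m ≤ i), 𝒜 i := aux_memF 𝒜 m hmin
  set r := u - lam • (1 : A) with hr
  have hrF : r ∈ ⨆ i, ⨆ (_ : 1 ≤ i), 𝒜 i := by
    refine aux_memF 𝒜 1 fun j hj => ?_
    obtain rfl : j = 0 := Nat.lt_one_iff.mp hj
    rw [hr, aux_proj_sub, aux_proj_smul,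
      DirectSum.decompose_of_mem_same 𝒜 SetLike.GradedOne.one_mem, ← hlam, sub_self]
  have hurel : u = lam • (1 : A) + r := by rw [hr]; abel
  have hrb : (DirectSum.decompose 𝒜 (r * b) m : A) = 0 :=
    aux_projF 𝒜 (aux_Fmul 𝒜 1 m (Submodule.mul_mem_mul hrF hbF)) (by omega)
  have hbr : (DirectSum.decompose 𝒜 (b * r) m : A) = 0 :=
    aux_projF 𝒜 (aux_Fmul 𝒜 m 1 (Submodule.mul_mem_mul hbF hrF)) (by omega)
  have hLHS : (DirectSum.decompose 𝒜 (u * b) m : A) =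
      lam • (DirectSum.decompose 𝒜 b m : A) := by
    conv_lhs => rw [hurel]
    rw [add_mul, smul_mul_assoc, one_mul, aux_proj_add, aux_proj_smul, hrb, add_zero]
  have hRHS : (DirectSum.decompose 𝒜 (b * u) m : A) =
      lam • (DirectSum.decompose 𝒜 b m : A) := by
    conv_lhs => rw [hurel]
    rw [mul_add, mul_smul_comm, mul_one, aux_proj_add, aux_proj_smul, hbr, add_zero]
  have heq : lam • (DirectSum.decompose 𝒜 b m : A) =
      c • (lam • (DirectSum.decompose 𝒜 b m : A)) := by
    have h1 : (DirectSum.decompose 𝒜 (u * b) m : A) =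
        c • (DirectSum.decompose 𝒜 (b * u) m : A) := by
      rw [hrel, aux_proj_smul]
    rw [hLHS, hRHS] at h1
    exact h1
  have hz : (lam - c * lam) • (DirectSum.decompose 𝒜 b m : A) = 0 := by
    rw [sub_smul, mul_smul, ← heq, sub_self]
  rcases smul_eq_zero.mp hz with h | h
  · have h' : lam * (1 - c) = 0 := by linear_combination h
    rcases mul_eq_zero.mp h' with h'' | h''
    · exact hne h''
    · exact hc (by linear_combination -h'')
  · exact hm h



lemma aux_gen1 (h0 : 𝒜 0 = Submodule.span K {(1 : A)}) {n : ℕ} {x : Fin n → A}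
    (h1 : 𝒜 1 = Submodule.span K (Set.range x))
    (hqc : ∀ i : Fin n, ∃ a : A, a ≠ 0 ∧ ∃ c : K, c ≠ 1 ∧ x i * a = c • (a * x i))
    (τ : A ≃ₐ[K] A) :
    Submodule.map τ.toAlgHom.toLinearMap (𝒜 1) ≤ ⨆ i, ⨆ (_ : 1 ≤ i), 𝒜 i := by
  rw [h1, Submodule.map_span]
  refine Submodule.span_le.mpr ?_
  rintro _ ⟨_, ⟨i, rfl⟩, rfl⟩
  obtain ⟨a, ha0, c, hc, hrel⟩ := hqc i
  have hb : τ a ≠ 0 := fun h => ha0 (by simpa using τ.injective (h.trans (map_zero τ).symm))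
  have hrel' : τ (x i) * τ a = c • (τ a * τ (x i)) := by
    have h2 := congrArg τ hrel
    simpa [map_mul] using h2
  show τ (x i) ∈ _
  exact aux_q 𝒜 h0 hb hc hrel'

lemma aux_mapd (h0 : 𝒜 0 = Submodule.span K {(1 : A)})
    (hgen : Algebra.adjoin K ((𝒜 1 : Submodule K A) : Set A) = ⊤)
    {n : ℕ} {x : Fin n → A}
    (h1 : 𝒜 1 = Submodule.span K (Set.range x))
    (hqc : ∀ i : Fin n, ∃ a : A, a ≠ 0 ∧ ∃ c : K, c ≠ 1 ∧ x i * a = c • (a * x i))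
    (τ : A ≃ₐ[K] A) (d : ℕ) :
    Submodule.map τ.toAlgHom.toLinearMap (𝒜 d) ≤ ⨆ i, ⨆ (_ : d ≤ i), 𝒜 i :=
  calc Submodule.map τ.toAlgHom.toLinearMap (𝒜 d)
      ≤ Submodule.map τ.toAlgHom.toLinearMap (𝒜 1 ^ d) :=
        Submodule.map_mono (aux_deg1 𝒜 hgen d)
    _ = Submodule.map τ.toAlgHom.toLinearMap (𝒜 1) ^ d := Submodule.map_pow (𝒜 1) τ.toAlgHom d
    _ ≤ (⨆ i, ⨆ (_ : 1 ≤ i), 𝒜 i) ^ d := aux_pow_mono (aux_gen1 𝒜 h0 h1 hqc τ) d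
    _ ≤ ⨆ i, ⨆ (_ : d ≤ i), 𝒜 i := aux_Fpow 𝒜 d

end Aux

/-- let `A = ⨁ Aᵢ` be an ℕ-graded `K`-algebra with `A₀ = K`,
generated by `A₁ = K x₁ ⊕ ⋯ ⊕ K xₙ`, such that each `xᵢ` `q`-commutes
(with ratio `≠ 1`) with some nonzero element. Then for any algebra
automorphism `σ` and nonzero homogeneous `y` of degree `d`,
`σ(y) = y_d + y_{>d}` with `y_d ∈ A_d` nonzero and `y_{>d} ∈ ⨁_{i ≥ d+1} Aᵢ`. -/
theorem stmt8 (K : Type) [Field K] (A : Type) [Ring A] [Algebra K A]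
    (𝒜 : ℕ → Submodule K A) [GradedAlgebra 𝒜]
    (h0 : 𝒜 0 = Submodule.span K {(1 : A)})
    (n : ℕ) (x : Fin n → A)
    (h1 : 𝒜 1 = Submodule.span K (Set.range x))
    (hgen : Algebra.adjoin K ((𝒜 1 : Submodule K A) : Set A) = ⊤)
    (hqc : ∀ i : Fin n, ∃ a : A, a ≠ 0 ∧ ∃ c : K, c ≠ 1 ∧ x i * a = c • (a * x i))
    (σ : A ≃ₐ[K] A) (d : ℕ) (y : A) (hy : y ∈ 𝒜 d) (hy0 : y ≠ 0) :
    ∃ yd y' : A, yd ∈ 𝒜 d ∧ yd ≠ 0 ∧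
      y' ∈ (⨆ i, ⨆ (_ : d + 1 ≤ i), 𝒜 i) ∧ σ y = yd + y' := by
  classical
  have hσy : σ y ∈ ⨆ i, ⨆ (_ : d ≤ i), 𝒜 i :=
    aux_mapd 𝒜 h0 hgen h1 hqc σ d ⟨y, hy, rfl⟩
  set yd : A := (DirectSum.decompose 𝒜 (σ y) d : A) with hyd
  have hydd : (DirectSum.decompose 𝒜 yd d : A) = yd :=
    DirectSum.decompose_of_mem_same 𝒜 (SetLike.coe_mem _)
  refine ⟨yd, σ y - yd, SetLike.coe_mem _, ?_, ?_, by abel⟩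
  · -- yd ≠ 0
    intro hzero
    have hσy' : σ y ∈ ⨆ i, ⨆ (_ : d + 1 ≤ i), 𝒜 i := by
      refine aux_memF 𝒜 (d + 1) fun j hj => ?_
      rcases lt_or_eq_of_le (Nat.lt_succ_iff.mp hj) with hjd | rfl
      · exact aux_projF 𝒜 hσy hjd
      · exact hzero
    have hyF : y ∈ ⨆ i, ⨆ (_ : d + 1 ≤ i), 𝒜 i := by
      have h2 : ∀ k, Submodule.map σ.symm.toAlgHom.toLinearMap
          (⨆ i, ⨆ (_ : k ≤ i), 𝒜 i) ≤ ⨆ i, ⨆ (_ : k ≤ i), 𝒜 i := by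
        intro k
        rw [Submodule.map_iSup]
        refine iSup_le fun i => ?_
        rw [Submodule.map_iSup]
        refine iSup_le fun hi => ?_
        refine le_trans (aux_mapd 𝒜 h0 hgen h1 hqc σ.symm i) ?_
        refine iSup_le fun j => iSup_le fun hj => ?_
        exact le_iSup_of_le j (le_iSup_of_le (le_trans hi hj) le_rfl)
      have h3 := h2 (d + 1) (Submodule.mem_map_of_mem hσy')
      simpa using h3
    have h4 : (DirectSum.decompose 𝒜 y d : A) = 0 := aux_projF 𝒜 hyF (Nat.lt_succ_self d)
    rw [DirectSum.decompose_of_mem_same 𝒜 hy] at h4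
    exact hy0 h4
  · -- σ y - yd ∈ F (d+1)
    refine aux_memF 𝒜 (d + 1) fun j hj => ?_
    rw [aux_proj_sub]
    rcases lt_or_eq_of_le (Nat.lt_succ_iff.mp hj) with hjd | rfl
    · rw [aux_projF 𝒜 hσy hjd,
        DirectSum.decompose_of_mem_ne 𝒜 (SetLike.coe_mem (DirectSum.decompose 𝒜 (σ y) d))
          (by omega), sub_zero]
    · rw [hydd, sub_self]
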